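/- arXiv:2601.18175 — 3 statements merged into one kernel-verified Lean document; each statement's English description precedes it below -/
import Mathlib

section
/- Chi-squared tolerance, lower bound: for every c ∈ (0, √ε) there exists δ₀ ∈ (0,1), depending only on c and ε and not on k, such that for all δ ∈ (0, δ₀), the probability mass function π with π(a⋆) = δ + c√δ and π(aᵢ) = (1 − δ − c√δ)/k for i = 1,…,k satisfies χ²(π‖π0) ≤ ε. Consequently sup{π(a⋆) : χ²(π‖π0) ≤ ε} ≥ δ + c√δ for all δ ∈ (0, δ₀). -/
/-- A pmf on a finite type, as a real-valued function. -/
def IsPMFOn {α : Type*} [Fintype α] (p : α → ℝ) : Prop :=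
  (∀ x, 0 ≤ p x) ∧ ∑ x, p x = 1

/-- Rare-action behavior policy on the action set `{a⋆, a₁, …, a_k}` (modeled as
`Option (Fin k)`, with `a⋆ = none`): `π0(a⋆) = δ` and `π0(aᵢ) = (1−δ)/k`. -/
noncomputable def rarePi0 (k : ℕ) (δ : ℝ) : Option (Fin k) → ℝ
  | none => δ
  | some _ => (1 - δ) / k

/-- Chi-squared divergence `χ²(p‖q) = Σ_x q(x)·(p(x)/q(x) − 1)²`. -/
noncomputable def chiSqDiv {α : Type*} [Fintype α] (p q : α → ℝ) : ℝ :=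
  ∑ x, q x * (p x / q x - 1) ^ 2

/-- The perturbed policy with `π(a⋆) = δ + c·√δ` and `π(aᵢ) = (1 − δ − c·√δ)/k`. -/
noncomputable def rarePertChi (k : ℕ) (δ c : ℝ) : Option (Fin k) → ℝ
  | none => δ + c * Real.sqrt δ
  | some _ => (1 - (δ + c * Real.sqrt δ)) / k

/-- **Chi-squared tolerance for a rare action, lower bound.**
For every `c ∈ (0, √ε)` there exists `δ₀ ∈ (0,1)`, depending only on `c` and `ε`
and not on `k`, such that for all `k ≥ 2` and all `δ ∈ (0, δ₀)`, the probability
mass function `π` with `π(a⋆) = δ + c√δ` and `π(aᵢ) = (1 − δ − c√δ)/k` satisfies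
`χ²(π‖π0) ≤ ε`.  Consequently `sup{π(a⋆) : π pmf, χ²(π‖π0) ≤ ε} ≥ δ + c√δ`. -/
theorem chiSq_rare_action_lower_bound
    (ε : ℝ) (hε : 0 < ε) (c : ℝ) (hc0 : 0 < c) (hc : c < Real.sqrt ε) :
    ∃ δ₀ ∈ Set.Ioo (0 : ℝ) 1, ∀ k : ℕ, 2 ≤ k → ∀ δ ∈ Set.Ioo (0 : ℝ) δ₀,
      (IsPMFOn (rarePertChi k δ c) ∧ chiSqDiv (rarePertChi k δ c) (rarePi0 k δ) ≤ ε)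
      ∧ δ + c * Real.sqrt δ
          ≤ sSup {p : ℝ | ∃ π : Option (Fin k) → ℝ,
              IsPMFOn π ∧ chiSqDiv π (rarePi0 k δ) ≤ ε ∧ π none = p} := by

  have hc2 : c ^ 2 < ε := by
    nlinarith [Real.sq_sqrt hε.le, Real.sqrt_nonneg ε]
  refine ⟨min (1 - c ^ 2 / ε) ((1 / (1 + c)) ^ 2), ⟨?_, ?_⟩, ?_⟩
  · apply lt_min
    · have : c ^ 2 / ε < 1 := (div_lt_one hε).2 hc2
      linarith
    · positivity
  · have h1 : (1 / (1 + c)) ^ 2 < 1 := by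
      apply pow_lt_one₀ (by positivity)
      · rw [div_lt_one (by linarith)]; linarith
      · norm_num
    exact lt_of_le_of_lt (min_le_right _ _) h1
  intro k hk δ hδ
  obtain ⟨hδ0, hδlt⟩ := hδ
  have hδ1 : δ < 1 - c ^ 2 / ε := lt_of_lt_of_le hδlt (min_le_left _ _)
  have hδ2 : δ < (1 / (1 + c)) ^ 2 := lt_of_lt_of_le hδlt (min_le_right _ _)
  have hk0 : (k : ℝ) ≠ 0 := Nat.cast_ne_zero.2 (by omega)
  have hs0 : 0 < Real.sqrt δ := Real.sqrt_pos.2 hδ0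
  have hs2 : Real.sqrt δ ^ 2 = δ := Real.sq_sqrt hδ0.le
  have hs1 : Real.sqrt δ < 1 / (1 + c) := by
    have := Real.sqrt_lt_sqrt hδ0.le hδ2
    rwa [Real.sqrt_sq (by positivity : (0:ℝ) ≤ 1 / (1 + c))] at this
  have h1c : Real.sqrt δ * (1 + c) < 1 := (lt_div_iff₀ (by linarith)).1 hs1
  have hslt1 : Real.sqrt δ < 1 := by nlinarith [mul_nonneg hc0.le hs0.le]
  have hA : δ + c * Real.sqrt δ < 1 := by nlinarith
  have hA0 : 0 < δ + c * Real.sqrt δ := by positivity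
  have h1δ : (0:ℝ) < 1 - δ := by nlinarith
  have hpmf : IsPMFOn (rarePertChi k δ c) := by
    constructor
    · intro x
      cases x with
      | none => simp only [rarePertChi]; linarith
      | some i =>
          simp only [rarePertChi]
          apply div_nonneg (by linarith) (by positivity)
    · rw [Fintype.sum_option]
      simp only [rarePertChi, Finset.sum_const, Finset.card_univ, Fintype.card_fin,
        nsmul_eq_mul]
      field_simp
      ring
  have hchi : chiSqDiv (rarePertChi k δ c) (rarePi0 k δ) = c ^ 2 / (1 - δ) := by
    unfold chiSqDiv rarePertChi rarePi0
    rw [Fintype.sum_option]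
    simp only [Finset.sum_const, Finset.card_univ, Fintype.card_fin, nsmul_eq_mul]
    rw [← hs2, Real.sqrt_sq hs0.le]
    have hsne : Real.sqrt δ ≠ 0 := ne_of_gt hs0
    have h1δ' : (1:ℝ) - Real.sqrt δ ^ 2 ≠ 0 := by rw [hs2]; linarith
    field_simp
    ring_nf
  have hchile : chiSqDiv (rarePertChi k δ c) (rarePi0 k δ) ≤ ε := by
    rw [hchi, div_le_iff₀ h1δ]
    have h3 : c ^ 2 / ε < 1 - δ := by linarith
    have h4 := (div_lt_iff₀ hε).1 h3
    nlinarith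
  refine ⟨⟨hpmf, hchile⟩, ?_⟩
  have hmem : δ + c * Real.sqrt δ ∈ {p : ℝ | ∃ π : Option (Fin k) → ℝ,
      IsPMFOn π ∧ chiSqDiv π (rarePi0 k δ) ≤ ε ∧ π none = p} :=
    ⟨rarePertChi k δ c, hpmf, hchile, rfl⟩
  have hbdd : BddAbove {p : ℝ | ∃ π : Option (Fin k) → ℝ,
      IsPMFOn π ∧ chiSqDiv π (rarePi0 k δ) ≤ ε ∧ π none = p} := by
    refine ⟨1, fun p hp => ?_⟩
    obtain ⟨π, hπ, -, hπn⟩ := hp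
    have := Finset.single_le_sum (fun i _ => hπ.1 i) (Finset.mem_univ (none : Option (Fin k)))
    rw [hπ.2] at this
    rw [← hπn]; exact this
  exact le_csSup hbdd hmem
end

section
/- Forward-KL tolerance, upper bound: for every c > ε there exists δ₀ ∈ (0,1), depending only on c and ε and not on k, such that for all δ ∈ (0, δ₀), every probability mass function π on {a⋆, a₁, …, a_k} with KL(π‖π0) ≤ ε satisfies π(a⋆) ≤ c/log(1/δ). -/
/-- Forward KL divergence `KL(p‖q) = Σ_x p(x)·log(p(x)/q(x))`
(with the junk-value convention `0·log 0 = 0`, automatic since `Real.log 0 = 0`). -/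
noncomputable def klDivFin {α : Type*} [Fintype α] (p q : α → ℝ) : ℝ :=
  ∑ x, p x * Real.log (p x / q x)

lemma aux_mul_log_div_ge (x q : ℝ) (hx : 0 ≤ x) (hq : 0 < q) :
    x - q ≤ x * Real.log (x / q) := by
  rcases eq_or_lt_of_le hx with h | h
  · simp [← h]; linarith
  · have h1 : Real.log (q / x) ≤ q / x - 1 := Real.log_le_sub_one_of_pos (by positivity)
    have h2 : Real.log (x / q) = - Real.log (q / x) := by
      rw [← Real.log_inv]
      congr 1
      field_simp
    have h3 : x * Real.log (q / x) ≤ x * (q / x - 1) :=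
      mul_le_mul_of_nonneg_left h1 h.le
    have h4 : x * (q / x - 1) = q - x := by field_simp
    rw [h2]
    linarith

lemma aux_self_log_ge_sub_one (p : ℝ) (hp : 0 ≤ p) : p - 1 ≤ p * Real.log p := by
  rcases eq_or_lt_of_le hp with h | h
  · simp [← h]
  · have h1 : Real.log p⁻¹ ≤ p⁻¹ - 1 := Real.log_le_sub_one_of_pos (by positivity)
    rw [Real.log_inv] at h1
    have h2 : p * (-(p⁻¹ - 1)) ≤ p * Real.log p := by
      apply mul_le_mul_of_nonneg_left _ h.le
      linarith
    have h3 : p * (-(p⁻¹ - 1)) = p - 1 := by field_simp; ring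
    linarith

lemma aux_self_log_ge_sqrt (p : ℝ) (hp : 0 ≤ p) : -2 * Real.sqrt p ≤ p * Real.log p := by
  rcases eq_or_lt_of_le hp with h | h
  · simp [← h]
  · have hs : 0 < Real.sqrt p := Real.sqrt_pos.mpr h
    have h1 : Real.log (Real.sqrt p)⁻¹ ≤ (Real.sqrt p)⁻¹ - 1 :=
      Real.log_le_sub_one_of_pos (by positivity)
    rw [Real.log_inv, Real.log_sqrt hp] at h1
    -- - log p / 2 ≤ 1/√p - 1, so log p ≥ 2 - 2/√p ≥ -2/√p
    have h2 : -2 * (Real.sqrt p)⁻¹ ≤ Real.log p := by linarith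
    have h3 : p * (-2 * (Real.sqrt p)⁻¹) ≤ p * Real.log p :=
      mul_le_mul_of_nonneg_left h2 h.le
    have hps : Real.sqrt p * Real.sqrt p = p := Real.mul_self_sqrt hp
    have hdiv : p * (Real.sqrt p)⁻¹ = Real.sqrt p := by
      rw [← div_eq_mul_inv]; exact Real.div_sqrt
    have h4 : p * (-2 * (Real.sqrt p)⁻¹) = -2 * Real.sqrt p := by
      rw [show p * (-2 * (Real.sqrt p)⁻¹) = -2 * (p * (Real.sqrt p)⁻¹) by ring, hdiv]
    linarith

/-- **Forward-KL tolerance for a rare action, upper bound.**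
For every `c > ε` there exists `δ₀ ∈ (0,1)`, depending only on `c` and `ε` and not
on `k`, such that for all `k ≥ 2` and all `δ ∈ (0, δ₀)`, every probability mass
function `π` on `{a⋆, a₁, …, a_k}` with `KL(π‖π0) ≤ ε` satisfies
`π(a⋆) ≤ c / log(1/δ)`. -/
theorem kl_rare_action_upper_bound
    (ε : ℝ) (hε : 0 < ε) (c : ℝ) (hc : ε < c) :
    ∃ δ₀ ∈ Set.Ioo (0 : ℝ) 1, ∀ k : ℕ, 2 ≤ k → ∀ δ ∈ Set.Ioo (0 : ℝ) δ₀,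
      ∀ π : Option (Fin k) → ℝ, IsPMFOn π → klDivFin π (rarePi0 k δ) ≤ ε →
        π none ≤ c / Real.log (1 / δ) := by
  set A : ℝ := (c - ε) / 2 with hAdef
  have hA0 : 0 < A := by simp only [hAdef]; linarith
  set M : ℝ := ε + 1 with hMdef
  have hM0 : 0 < M := by simp only [hMdef]; linarith
  set L0 : ℝ := 4 * M / A ^ 2 + M / A + 1 with hL0def
  clear_value A M
  have hL0 : 0 < L0 := by rw [hL0def]; positivity
  refine ⟨Real.exp (-L0), ⟨Real.exp_pos _, ?_⟩, ?_⟩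
  · exact Real.exp_lt_one_iff.mpr (by linarith)
  intro k hk δ hδ π hπ hKL
  obtain ⟨hδ0, hδ1⟩ := hδ
  have hexp1 : Real.exp (-L0) < 1 := Real.exp_lt_one_iff.mpr (by linarith)
  have hδlt1 : δ < 1 := lt_trans hδ1 hexp1
  set L : ℝ := Real.log (1 / δ) with hLdef
  have hLlog : L = -Real.log δ := by
    rw [hLdef, one_div, Real.log_inv]
  have hL : L0 < L := by
    have h := Real.log_lt_log hδ0 hδ1
    rw [Real.log_exp] at h
    linarith [hLlog, h]
  have hLpos : 0 < L := lt_trans hL0 hL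
  set p : ℝ := π none with hpdef
  obtain ⟨hpos, hsum⟩ := hπ
  have hp0 : 0 ≤ p := hpos none
  have hk0 : (0 : ℝ) < (k : ℝ) := by
    have : (0 : ℕ) < k := by omega
    exact_mod_cast this
  have hq : 0 < (1 - δ) / (k : ℝ) := by
    apply div_pos (by linarith) hk0
  have hsum' : ∑ i : Fin k, π (some i) = 1 - p := by
    rw [Fintype.sum_option] at hsum
    linarith
  -- decomposition of KL
  have hKLdec : klDivFin π (rarePi0 k δ) =
      p * Real.log (p / δ) +
        ∑ i : Fin k, π (some i) * Real.log (π (some i) / ((1 - δ) / (k : ℝ))) := by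
    unfold klDivFin
    rw [Fintype.sum_option]
    rfl
  clear_value L0 L p
  -- tail lower bound
  have htail : δ - p ≤ ∑ i : Fin k, π (some i) * Real.log (π (some i) / ((1 - δ) / (k : ℝ))) := by
    have hconst : ∑ _i : Fin k, (1 - δ) / (k : ℝ) = 1 - δ := by
      rw [Finset.sum_const, Finset.card_univ, Fintype.card_fin, nsmul_eq_mul]
      field_simp
    calc δ - p = (∑ i : Fin k, π (some i)) - ∑ _i : Fin k, (1 - δ) / (k : ℝ) := by
          rw [hsum', hconst]; ring
      _ = ∑ i : Fin k, (π (some i) - (1 - δ) / (k : ℝ)) := by rw [Finset.sum_sub_distrib]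
      _ ≤ _ := Finset.sum_le_sum fun i _ => aux_mul_log_div_ge _ _ (hpos _) hq
  -- head decomposition
  have hhead : p * Real.log (p / δ) = p * Real.log p + p * L := by
    rcases eq_or_lt_of_le hp0 with h | h
    · simp [← h]
    · rw [Real.log_div h.ne' hδ0.ne', hLlog]
      ring
  -- preliminary bound: p ≤ M / L
  have hpre : p ≤ M / L := by
    have h1 := aux_self_log_ge_sub_one p hp0
    have : p * L + δ - 1 ≤ ε := by
      have := hKL
      rw [hKLdec, hhead] at this
      linarith
    rw [le_div_iff₀ hLpos]
    simp only [hMdef]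
    linarith
  -- bounds on M/L
  have hAL0 : A * L0 = 4 * M / A + M + A := by
    rw [hL0def]
    field_simp
  have hML1 : M / L ≤ A := by
    rw [div_le_iff₀ hLpos]
    have h1 : A * L0 ≤ A * L := mul_le_mul_of_nonneg_left hL.le hA0.le
    have h2 : 0 ≤ 4 * M / A := by positivity
    linarith [h1, hAL0, h2]
  have hA2L0 : A ^ 2 * L0 = 4 * M + A * M + A ^ 2 := by
    rw [hL0def]
    field_simp
  have hML2 : M / L ≤ A ^ 2 / 4 := by
    rw [div_le_div_iff₀ hLpos (by norm_num)]
    have h1 : A ^ 2 * L0 ≤ A ^ 2 * L := mul_le_mul_of_nonneg_left hL.le (by positivity)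
    linarith [h1, hA2L0, mul_pos hA0 hM0, sq_nonneg A]
  have hsqML : Real.sqrt (M / L) ≤ A / 2 := by
    have h1 : Real.sqrt (M / L) ≤ Real.sqrt ((A / 2) ^ 2) := by
      apply Real.sqrt_le_sqrt
      have : (A / 2) ^ 2 = A ^ 2 / 4 := by ring
      linarith [hML2]
    rwa [Real.sqrt_sq (by positivity)] at h1
  have hsqp : Real.sqrt p ≤ A / 2 :=
    le_trans (Real.sqrt_le_sqrt hpre) hsqML
  -- refined bound
  have h2 := aux_self_log_ge_sqrt p hp0
  have hfinal : p * L ≤ c := by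
    have hε' : p * Real.log p + p * L + (δ - p) ≤ ε := by
      have := hKL
      rw [hKLdec, hhead] at this
      linarith
    have hpA : p ≤ A := le_trans hpre hML1
    have : p * L ≤ ε + 2 * Real.sqrt p + p - δ := by linarith
    have hcA : ε + 2 * (A / 2) + A = c := by
      simp only [hAdef]; ring
    linarith
  rw [le_div_iff₀ hLpos]
  exact hfinal
end

section
/- Forward-KL tolerance, lower bound: for every c ∈ (0, ε) there exists δ₀ ∈ (0,1), depending only on c and ε and not on k, such that for all δ ∈ (0, δ₀), the probability mass function π with π(a⋆) = c/log(1/δ) and π(aᵢ) = (1 − c/log(1/δ))/k for i = 1,…,k satisfies KL(π‖π0) ≤ ε. Consequently sup{π(a⋆) : KL(π‖π0) ≤ ε} ≥ c/log(1/δ) for all δ ∈ (0, δ₀). -/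
/-- The perturbed policy with `π(a⋆) = c/log(1/δ)` and
`π(aᵢ) = (1 − c/log(1/δ))/k`. -/
noncomputable def rarePertKL (k : ℕ) (δ c : ℝ) : Option (Fin k) → ℝ
  | none => c / Real.log (1 / δ)
  | some _ => (1 - c / Real.log (1 / δ)) / k

/-- **Forward-KL tolerance for a rare action, lower bound.**
For every `c ∈ (0, ε)` there exists `δ₀ ∈ (0,1)`, depending only on `c` and `ε`
and not on `k`, such that for all `k ≥ 2` and all `δ ∈ (0, δ₀)`, the probability
mass function `π` with `π(a⋆) = c/log(1/δ)` and `π(aᵢ) = (1 − c/log(1/δ))/k`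
satisfies `KL(π‖π0) ≤ ε`.  Consequently
`sup{π(a⋆) : π pmf, KL(π‖π0) ≤ ε} ≥ c/log(1/δ)`. -/
theorem kl_rare_action_lower_bound
    (ε : ℝ) (hε : 0 < ε) (c : ℝ) (hc0 : 0 < c) (hc : c < ε) :
    ∃ δ₀ ∈ Set.Ioo (0 : ℝ) 1, ∀ k : ℕ, 2 ≤ k → ∀ δ ∈ Set.Ioo (0 : ℝ) δ₀,
      (IsPMFOn (rarePertKL k δ c) ∧ klDivFin (rarePertKL k δ c) (rarePi0 k δ) ≤ ε)
      ∧ c / Real.log (1 / δ)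
          ≤ sSup {p : ℝ | ∃ π : Option (Fin k) → ℝ,
              IsPMFOn π ∧ klDivFin π (rarePi0 k δ) ≤ ε ∧ π none = p} := by

  have hcε : Real.exp (c - ε) < 1 := Real.exp_lt_one_iff.mpr (by linarith)
  have hec : Real.exp (-c) < 1 := Real.exp_lt_one_iff.mpr (by linarith)
  refine ⟨min (1 - Real.exp (c - ε)) (Real.exp (-c)), ⟨lt_min (by linarith) (Real.exp_pos _),
    lt_of_le_of_lt (min_le_right _ _) hec⟩, ?_⟩
  intro k hk δ ⟨hδ0, hδlt⟩
  have hkpos : (0 : ℝ) < k := by positivity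
  have hk0 : (k : ℝ) ≠ 0 := ne_of_gt hkpos
  have hδc : δ < Real.exp (-c) := lt_of_lt_of_le hδlt (min_le_right _ _)
  have hδ1' : δ < 1 - Real.exp (c - ε) := lt_of_lt_of_le hδlt (min_le_left _ _)
  have hδ1 : δ < 1 := by linarith [Real.exp_pos (c - ε)]
  have hL : Real.log (1 / δ) = -Real.log δ := by rw [one_div, Real.log_inv]
  have hlogδ : Real.log δ < -c := by
    have := Real.log_lt_log hδ0 hδc
    rwa [Real.log_exp] at this
  set L := Real.log (1 / δ) with hLdef
  have hLc : c < L := by rw [hL]; linarith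
  have hLpos : 0 < L := lt_trans hc0 hLc
  set t := c / L with htdef
  have ht0 : 0 < t := div_pos hc0 hLpos
  have ht1 : t < 1 := (div_lt_one hLpos).mpr hLc
  have htL : t * L = c := div_mul_cancel₀ c (ne_of_gt hLpos)
  have h1δ : 0 < 1 - δ := by linarith
  have hlog1δ : c - ε < Real.log (1 - δ) := by
    have := Real.log_lt_log (Real.exp_pos _) (by linarith : Real.exp (c - ε) < 1 - δ)
    rwa [Real.log_exp] at this
  have hlog1δ' : Real.log (1 - δ) ≤ 0 := Real.log_nonpos (le_of_lt h1δ) (by linarith)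
  have hpmf : IsPMFOn (rarePertKL k δ c) := by
    constructor
    · intro x
      cases x with
      | none => exact le_of_lt ht0
      | some i => exact div_nonneg (by linarith) (le_of_lt hkpos)
    · rw [Fintype.sum_option]
      simp only [rarePertKL, Finset.sum_const, Finset.card_univ, Fintype.card_fin,
        nsmul_eq_mul]
      field_simp
      ring
  have hkl : klDivFin (rarePertKL k δ c) (rarePi0 k δ) ≤ ε := by
    have harg : ((1 - t) / k) / ((1 - δ) / k) = (1 - t) / (1 - δ) := by
      rw [div_div_div_cancel_right₀]
      exact hk0
    have hkl_eq : klDivFin (rarePertKL k δ c) (rarePi0 k δ)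
        = t * Real.log (t / δ) + (1 - t) * Real.log ((1 - t) / (1 - δ)) := by
      unfold klDivFin
      rw [Fintype.sum_option]
      simp only [rarePertKL, rarePi0, Finset.sum_const, Finset.card_univ, Fintype.card_fin,
        nsmul_eq_mul, harg]
      rw [← htdef]
      field_simp
    rw [hkl_eq]
    have h1 : t * Real.log (t / δ) = t * Real.log t + c := by
      rw [Real.log_div (ne_of_gt ht0) (ne_of_gt hδ0)]
      have hc' : t * (-Real.log δ) = c := by rw [← hL]; exact htL
      linear_combination hc'
    have h2 : t * Real.log t ≤ 0 := by
      have := Real.log_nonpos (le_of_lt ht0) (le_of_lt ht1)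
      nlinarith
    have hA : Real.log ((1 - t) / (1 - δ)) ≤ -Real.log (1 - δ) := by
      have h3 : (1 - t) / (1 - δ) ≤ 1 / (1 - δ) := by gcongr; linarith
      have h4 := Real.log_le_log (div_pos (by linarith) h1δ) h3
      rwa [one_div, Real.log_inv] at h4
    have hB : 0 ≤ -Real.log (1 - δ) := by linarith
    have h5 : (1 - t) * Real.log ((1 - t) / (1 - δ)) ≤ -Real.log (1 - δ) := by
      nlinarith [hA, hB, ht1, ht0]
    linarith [h1, h2, h5, hlog1δ]
  refine ⟨⟨hpmf, hkl⟩, ?_⟩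
  have hmem : t ∈ {p : ℝ | ∃ π : Option (Fin k) → ℝ,
      IsPMFOn π ∧ klDivFin π (rarePi0 k δ) ≤ ε ∧ π none = p} :=
    ⟨rarePertKL k δ c, hpmf, hkl, rfl⟩
  have hbdd : BddAbove {p : ℝ | ∃ π : Option (Fin k) → ℝ,
      IsPMFOn π ∧ klDivFin π (rarePi0 k δ) ≤ ε ∧ π none = p} := by
    refine ⟨1, ?_⟩
    rintro p ⟨π, ⟨hπ0, hπ1⟩, -, rfl⟩
    calc π none ≤ ∑ x, π x :=
          Finset.single_le_sum (fun x _ => hπ0 x) (Finset.mem_univ none)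
      _ = 1 := hπ1
  exact le_csSup hbdd hmem
end
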